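/- Let G be a finite group acting by ring automorphisms on a commutative Noetherian ring A with |G| invertible in A. Then the invariant subring A^G is Noetherian. -/
import Mathlib

/-- The subring of `G`-invariant elements of `A`. -/
def fixedSubring (G A : Type*) [Monoid G] [CommRing A] [MulSemiringAction G A] : Subring A where
  carrier := {a | ∀ g : G, g • a = a}
  mul_mem' := by intro a b ha hb g; rw [smul_mul', ha g, hb g]
  one_mem' := fun g => smul_one g
  add_mem' := by intro a b ha hb g; rw [smul_add, ha g, hb g]
  zero_mem' := fun g => smul_zero g
  neg_mem' := by intro a ha g; rw [smul_neg, ha g]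

section Reynolds

variable (G : Type*) {A : Type*} [Group G] [Fintype G] [CommRing A]
    [MulSemiringAction G A] [Invertible ((Fintype.card G : A))]

/-- Reynolds operator. -/
noncomputable def reynolds (a : A) : A :=
  ⅟ ((Fintype.card G : A)) * ∑ g : G, g • a

lemma smul_card_inv (g : G) : g • ⅟ ((Fintype.card G : A)) = ⅟ ((Fintype.card G : A)) := by
  symm
  apply invOf_eq_right_inv
  have h1 : g • ((Fintype.card G : A)) = (Fintype.card G : A) :=
    map_natCast (MulSemiringAction.toRingHom G A g) _
  calc (Fintype.card G : A) * (g • ⅟ ((Fintype.card G : A)))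
      = (g • ((Fintype.card G : A))) * (g • ⅟ ((Fintype.card G : A))) := by rw [h1]
    _ = g • (((Fintype.card G : A)) * ⅟ ((Fintype.card G : A))) := (smul_mul' g _ _).symm
    _ = 1 := by rw [mul_invOf_self, smul_one]

lemma reynolds_mem_fixed (a : A) : reynolds G a ∈ fixedSubring G A := by
  intro g
  rw [reynolds, smul_mul', smul_card_inv, Finset.smul_sum]
  congr 1
  exact Fintype.sum_equiv (Equiv.mulLeft g) _ _ (fun x => by rw [Equiv.coe_mulLeft, mul_smul])

lemma reynolds_add (a b : A) : reynolds G (a + b) = reynolds G a + reynolds G b := by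
  simp [reynolds, smul_add, Finset.sum_add_distrib, mul_add]

lemma reynolds_fixed {a : A} (ha : a ∈ fixedSubring G A) : reynolds G a = a := by
  rw [reynolds]
  have : ∑ g : G, g • a = (Fintype.card G : A) * a := by
    rw [Finset.sum_congr rfl (fun g _ => ha g)]
    simp [Finset.sum_const, nsmul_eq_mul]
  rw [this, invOf_mul_cancel_left]

lemma reynolds_mul_fixed (a : A) {b : A} (hb : b ∈ fixedSubring G A) :
    reynolds G (a * b) = reynolds G a * b := by
  rw [reynolds, reynolds, mul_assoc, Finset.sum_mul]
  congr 1
  exact Finset.sum_congr rfl (fun g _ => by rw [smul_mul', hb g])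

end Reynolds

/-- If `A` is Noetherian and `|G|` is invertible in `A`, then `A^G` is Noetherian. -/
theorem invariant_subring_noetherian (G A : Type*) [Group G] [Fintype G] [CommRing A]
    [MulSemiringAction G A] [Invertible ((Fintype.card G : A))] [IsNoetherianRing A] :
    IsNoetherianRing (fixedSubring G A) := by
  set R := fixedSubring G A
  let f : R →+* A := algebraMap R A
  -- key: comap f (map f I) = I
  have key : ∀ I : Ideal R, Ideal.comap f (Ideal.map f I) = I := by
    intro I
    apply le_antisymm
    · intro x hx
      have hx' : (x : A) ∈ Ideal.map f I := hx
      -- main claim by span induction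
      have main : ∀ y ∈ Ideal.map f I, ∀ a : A, ∃ r ∈ I, (r : A) = reynolds G (a * y) := by
        intro y hy
        refine Submodule.span_induction ?_ ?_ ?_ ?_ hy
        · rintro _ ⟨i, hi, rfl⟩ a
          refine ⟨(⟨reynolds G a, reynolds_mem_fixed G a⟩ : R) * i, I.mul_mem_left _ hi, ?_⟩
          push_cast
          rw [show f i = (i : A) from rfl, reynolds_mul_fixed G a i.2]
        · intro a
          exact ⟨0, I.zero_mem, by simp [reynolds, smul_zero]⟩
        · rintro y z _ _ hy hz a
          obtain ⟨r, hr, hr'⟩ := hy a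
          obtain ⟨s, hs, hs'⟩ := hz a
          exact ⟨r + s, I.add_mem hr hs, by rw [mul_add, reynolds_add]; push_cast [hr', hs']; ring⟩
        · rintro c y _ hy a
          obtain ⟨r, hr, hr'⟩ := hy (a * c)
          exact ⟨r, hr, by rw [hr', smul_eq_mul, mul_assoc]⟩
      obtain ⟨r, hr, hr'⟩ := main _ hx' 1
      rw [one_mul, reynolds_fixed G x.2] at hr'
      have : r = x := Subtype.ext hr'
      rwa [← this]
    · exact Ideal.le_comap_map
  -- build an order embedding of ideals
  let e : Ideal R ↪o Ideal A := OrderEmbedding.ofMapLEIff (fun I => Ideal.map f I)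
    (by
      intro I J
      constructor
      · intro h
        rw [← key I, ← key J]
        exact Ideal.comap_mono h
      · exact Ideal.map_mono)
  rw [isNoetherianRing_iff, isNoetherian_iff]
  have hA : WellFounded ((· > ·) : Ideal A → Ideal A → Prop) :=
    (isNoetherian_iff (R := A) (M := A)).mp (by infer_instance)
  exact (RelEmbedding.wellFounded ⟨e.toEmbedding, by intro a b; exact e.lt_iff_lt⟩ hA)
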